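/- Let p be a prime, q = p^t for t ≥ 0, and n = r·q for a positive integer r. Then for every S ⊆ [n-1], β_n(S) ≡ (-1)^{|S \ (q·[r-1])|} · β_r(S/q) (mod p), where q·[r-1] = {q, 2q, ..., (r-1)q} and S/q = {s/q : s ∈ S, q | s}. -/

import Mathlib

open Finset
open Fin.NatCast

def descSet (n : ℕ) (π : Equiv.Perm (Fin n)) : Finset ℕ :=
  (Finset.Icc 1 (n - 1)).filter (fun i =>
    ∃ h : i < n, π ⟨i, h⟩ < π ⟨i - 1, by omega⟩)

def descBeta (n : ℕ) (S : Finset ℕ) : ℕ :=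
  (Finset.univ.filter (fun π : Equiv.Perm (Fin n) => descSet n π = S)).card

def descAlpha (n : ℕ) (S : Finset ℕ) : ℕ :=
  (Finset.univ.filter (fun π : Equiv.Perm (Fin n) => descSet n π ⊆ S)).card

/-- number of elements of `S` that are `≤ x` : the "block index" of position `x`. -/
def blk (S : Finset ℕ) (x : ℕ) : ℕ := (S.filter (· ≤ x)).card

lemma blk_mono (S : Finset ℕ) {x y : ℕ} (h : x ≤ y) : blk S x ≤ blk S y := by
  apply Finset.card_le_card
  intro s hs
  simp only [mem_filter] at hs ⊢
  exact ⟨hs.1, le_trans hs.2 h⟩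

lemma blk_le_card (S : Finset ℕ) (x : ℕ) : blk S x ≤ S.card :=
  Finset.card_le_card (Finset.filter_subset _ _)

lemma blk_step (S : Finset ℕ) {i : ℕ} (hi : 1 ≤ i) :
    blk S i = blk S (i - 1) + (if i ∈ S then 1 else 0) := by
  unfold blk
  have h1 : S.filter (· ≤ i) = (S.filter (· ≤ i - 1)) ∪ (S.filter (· = i)) := by
    ext s
    simp only [mem_filter, mem_union]
    constructor
    · rintro ⟨hs, hle⟩
      rcases eq_or_lt_of_le hle with h | h
      · exact Or.inr ⟨hs, h⟩
      · exact Or.inl ⟨hs, by omega⟩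
    · rintro (⟨hs, h⟩ | ⟨hs, h⟩) <;> exact ⟨hs, by omega⟩
  rw [h1, Finset.card_union_of_disjoint]
  · congr 1
    by_cases h : i ∈ S
    · rw [if_pos h]
      rw [Finset.filter_eq' S i]  -- maybe
      rw [if_pos h]
      simp
    · rw [if_neg h]
      rw [Finset.filter_eq' S i, if_neg h]
      simp
  · rw [Finset.disjoint_filter]
    intro s _ h h2
    omega

lemma blk_zero (S : Finset ℕ) (hS : ∀ s ∈ S, 1 ≤ s) : blk S 0 = 0 := by
  unfold blk
  rw [Finset.card_eq_zero, Finset.filter_eq_empty_iff]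
  intro s hs
  have := hS s hs
  omega

/-- main characterization of `descSet n π ⊆ S` -/
lemma descSet_subset_iff {n : ℕ} (S : Finset ℕ)
    (π : Equiv.Perm (Fin n)) :
    descSet n π ⊆ S ↔ ∀ x y : Fin n, x < y → blk S x.val = blk S y.val → π x < π y := by
  constructor
  · intro hsub
    -- adjacent case
    have adj : ∀ i : ℕ, ∀ h : i + 1 < n, blk S i = blk S (i+1) →
        π ⟨i, by omega⟩ < π ⟨i+1, h⟩ := by
      intro i h hblk
      have hnotS : i + 1 ∉ S := by
        intro hmem
        have := blk_step S (i := i + 1) (by omega)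
        rw [if_pos hmem] at this
        simp only [Nat.add_sub_cancel] at this
        omega
      have hnotdesc : i + 1 ∉ descSet n π := fun hd => hnotS (hsub hd)
      have hmem : i + 1 ∈ Finset.Icc 1 (n-1) := by
        rw [Finset.mem_Icc]; omega
      rw [descSet, Finset.mem_filter] at hnotdesc
      push_neg at hnotdesc
      have h2 := hnotdesc hmem h
      simp only [Nat.add_sub_cancel] at h2
      have hne : π ⟨i, by omega⟩ ≠ π ⟨i+1, h⟩ := by
        intro heq
        have := π.injective heq
        simp only [Fin.mk.injEq] at this
        omega
      exact lt_of_le_of_ne h2 hne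
    -- general case by induction on the distance
    have key : ∀ d : ℕ, ∀ i : ℕ, ∀ h : i + d + 1 < n, blk S i = blk S (i + d + 1) →
        π ⟨i, by omega⟩ < π ⟨i + d + 1, h⟩ := by
      intro d
      induction d with
      | zero => intro i h hblk; exact adj i h hblk
      | succ d ih =>
        intro i h hblk
        rw [show i + (d+1) + 1 = i + d + 2 by omega] at hblk
        have h1 : i + d + 1 < n := by omega
        have hb1 : blk S i ≤ blk S (i + d + 1) := blk_mono S (by omega)
        have hb2 : blk S (i + d + 1) ≤ blk S (i + d + 2) := blk_mono S (by omega)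
        have hblk1 : blk S i = blk S (i + d + 1) := by omega
        have hblk2 : blk S (i + d + 1) = blk S (i + d + 2) := by omega
        have step1 := ih i h1 hblk1
        have step2 := adj (i + d + 1) (by omega) hblk2
        have : π ⟨i + d + 1, by omega⟩ < π ⟨i + d + 1 + 1, by omega⟩ := step2
        calc π ⟨i, by omega⟩ < π ⟨i + d + 1, h1⟩ := step1
          _ < π ⟨i + d + 2, h⟩ := by
              have : (⟨i + d + 1 + 1, by omega⟩ : Fin n) = ⟨i + d + 2, h⟩ := by
                congr 1
              rw [← this]; exact step2
    intro x y hxy hblk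
    obtain ⟨d, hd⟩ : ∃ d : ℕ, y.val = x.val + d + 1 := ⟨y.val - x.val - 1, by
      have := hxy; rw [Fin.lt_def] at this; omega⟩
    have h' : x.val + d + 1 < n := hd ▸ y.isLt
    have := key d x.val h' (by rw [← hd]; exact hblk)
    have hx : (⟨x.val, by omega⟩ : Fin n) = x := rfl
    have hy : (⟨x.val + d + 1, h'⟩ : Fin n) = y := by
      apply Fin.ext; simp [hd]
    rwa [hx, hy] at this
  · intro hmono i hi
    rw [descSet, Finset.mem_filter] at hi
    obtain ⟨hicc, hlt, hdesc⟩ := hi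
    rw [Finset.mem_Icc] at hicc
    by_contra hnot
    have hblk : blk S (i - 1) = blk S i := by
      have := blk_step S (i := i) (by omega)
      rw [if_neg hnot] at this
      omega
    have := hmono ⟨i - 1, by omega⟩ ⟨i, hlt⟩ (by rw [Fin.lt_def]; simp; omega)
      (by simpa using hblk.symm ▸ hblk)
    exact absurd hdesc (not_lt.mpr (le_of_lt this))

section rank
variable {α β : Type*} [LinearOrder α] [LinearOrder β] [DecidableEq α] [DecidableEq β]

lemma rank_eq_of_lt_filter {C : Finset β} {u v : β} (hu : u ∈ C) (hv : v ∈ C)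
    (h : (C.filter (· < u)).card = (C.filter (· < v)).card) : u = v := by
  by_contra hne
  have key : ∀ a b : β, a ∈ C → a < b → (C.filter (· < a)).card < (C.filter (· < b)).card := by
    intro a b ha hab
    apply Finset.card_lt_card
    have hsub : C.filter (· < a) ⊆ C.filter (· < b) :=
      Finset.monotone_filter_right C (fun x _ hx => lt_trans hx hab)
    rw [Finset.ssubset_iff_of_subset hsub]
    exact ⟨a, Finset.mem_filter.mpr ⟨ha, hab⟩, by simp⟩
  rcases lt_or_gt_of_ne hne with hlt | hlt
  · exact absurd h (ne_of_lt (key u v hu hlt))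
  · exact absurd h.symm (ne_of_lt (key v u hv hlt))

lemma image_filter_lt_of_strictMonoOn {A : Finset α} {g : α → β}
    (hg : ∀ a ∈ A, ∀ b ∈ A, a < b → g a < g b) {x : α} (hx : x ∈ A) :
    ((A.image g).filter (· < g x)).card = (A.filter (· < x)).card := by
  have himg : (A.filter (· < x)).image g = (A.image g).filter (· < g x) := by
    ext v
    simp only [Finset.mem_image, Finset.mem_filter]
    constructor
    · rintro ⟨a, ha, rfl⟩
      exact ⟨⟨a, ha.1, rfl⟩, hg a ha.1 x hx ha.2⟩
    · rintro ⟨⟨a, ha, rfl⟩, hlt⟩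
      refine ⟨a, ⟨ha, ?_⟩, rfl⟩
      by_contra hnot
      rcases eq_or_lt_of_le (not_lt.mp hnot) with h | h
      · exact absurd hlt (by rw [h]; exact lt_irrefl _)
      · exact absurd hlt (not_lt.mpr (le_of_lt (hg x hx a ha h)))
  rw [← himg]
  apply Finset.card_image_of_injOn
  intro a ha b hb hab
  rw [Finset.mem_coe, Finset.mem_filter] at ha hb
  by_contra hne
  rcases lt_or_gt_of_ne hne with h | h
  · exact absurd hab (ne_of_lt (hg a ha.1 b hb.1 h))
  · exact absurd hab.symm (ne_of_lt (hg b hb.1 a ha.1 h))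

lemma strictMonoOn_eq_of_image_eq {A : Finset α} {g h : α → β}
    (hg : ∀ a ∈ A, ∀ b ∈ A, a < b → g a < g b)
    (hh : ∀ a ∈ A, ∀ b ∈ A, a < b → h a < h b)
    (himg : A.image g = A.image h) {x : α} (hx : x ∈ A) : g x = h x := by
  apply rank_eq_of_lt_filter (C := A.image g)
    (Finset.mem_image_of_mem g hx) (himg ▸ Finset.mem_image_of_mem h hx)
  rw [image_filter_lt_of_strictMonoOn hg hx, himg,
    image_filter_lt_of_strictMonoOn hh hx]

end rank

/-- The set of functions `Fin n → Fin n` whose fibers have the same sizes as the fibers of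
the block function of `S`. -/
def Xset (n : ℕ) (S : Finset ℕ) : Finset (Fin n → Fin n) :=
  Finset.univ.filter (fun f => ∀ j : Fin n,
    (Finset.univ.filter (fun x => f x = j)).card
      = (Finset.univ.filter (fun x : Fin n => blk S x.val = j.val)).card)

lemma blk_lt {n : ℕ} (hn : 0 < n) {S : Finset ℕ} (hS : S ⊆ Finset.Icc 1 (n-1)) (x : ℕ) :
    blk S x < n := by
  have h1 := blk_le_card S x
  have h2 := Finset.card_le_card hS
  rw [Nat.card_Icc] at h2
  omega

lemma descAlpha_eq_card_Xset {n : ℕ} (hn : 0 < n) (S : Finset ℕ)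
    (hS : S ⊆ Finset.Icc 1 (n-1)) : descAlpha n S = (Xset n S).card := by
  classical
  set jdx : Fin n → Fin n := fun x => ⟨blk S x.val, blk_lt hn hS x.val⟩ with hjdx
  set enc : Equiv.Perm (Fin n) → (Fin n → Fin n) := fun π => (fun v => jdx (π.symm v))
    with henc
  rw [descAlpha]
  apply Finset.card_bij (fun π _ => enc π)
  · -- membership
    intro π _
    rw [Xset, Finset.mem_filter]
    refine ⟨Finset.mem_univ _, fun j => ?_⟩
    apply Finset.card_nbij' (i := fun x => π.symm x) (j := fun y => π y)
    · intro a ha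
      simp only [Finset.mem_coe, Finset.mem_filter, Finset.mem_univ, true_and, henc, hjdx] at ha ⊢
      rw [← ha]
    · intro a ha
      simp only [Finset.mem_coe, Finset.mem_filter, Finset.mem_univ, true_and, henc, hjdx] at ha ⊢
      rw [Fin.ext_iff]
      simpa using ha
    · intro a _; simp
    · intro a _; simp
  · -- injectivity
    intro π hπ σ hσ heq
    simp only [Finset.mem_coe, Finset.mem_filter, Finset.mem_univ, true_and] at hπ hσ
    rw [descSet_subset_iff S] at hπ hσ
    have hptw : ∀ v : Fin n, blk S (π.symm v).val = blk S (σ.symm v).val := by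
      intro v
      have := congrFun heq v
      simpa [henc, hjdx, Fin.ext_iff] using this
    ext x
    · set A : Finset (Fin n) := Finset.univ.filter (fun y => blk S y.val = blk S x.val) with hA
      have hxA : x ∈ A := by simp [hA]
      have himgπ : A.image π = Finset.univ.filter
          (fun v => blk S (π.symm v).val = blk S x.val) := by
        ext v
        simp only [hA, Finset.mem_image, Finset.mem_filter, Finset.mem_univ, true_and]
        constructor
        · rintro ⟨y, hy, rfl⟩; rwa [Equiv.symm_apply_apply]
        · intro hv; exact ⟨π.symm v, hv, Equiv.apply_symm_apply _ _⟩
      have himgσ : A.image σ = Finset.univ.filter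
          (fun v => blk S (σ.symm v).val = blk S x.val) := by
        ext v
        simp only [hA, Finset.mem_image, Finset.mem_filter, Finset.mem_univ, true_and]
        constructor
        · rintro ⟨y, hy, rfl⟩; rwa [Equiv.symm_apply_apply]
        · intro hv; exact ⟨σ.symm v, hv, Equiv.apply_symm_apply _ _⟩
      have himg : A.image π = A.image σ := by
        rw [himgπ, himgσ]
        apply Finset.filter_congr
        intro v _
        simp [hptw v]
      have hmonoπ : ∀ a ∈ A, ∀ b ∈ A, a < b → π a < π b := by
        intro a ha b hb hab
        simp only [hA, Finset.mem_filter, Finset.mem_univ, true_and] at ha hb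
        exact hπ a b hab (by rw [ha, hb])
      have hmonoσ : ∀ a ∈ A, ∀ b ∈ A, a < b → σ a < σ b := by
        intro a ha b hb hab
        simp only [hA, Finset.mem_filter, Finset.mem_univ, true_and] at ha hb
        exact hσ a b hab (by rw [ha, hb])
      have := strictMonoOn_eq_of_image_eq hmonoπ hmonoσ himg hxA
      rw [Fin.ext_iff] at this
      exact this
  · -- surjectivity
    intro f hf
    rw [Xset, Finset.mem_filter] at hf
    set A : Fin n → Finset (Fin n) := fun j => Finset.univ.filter (fun y => f y = j) with hA
    set B : Fin n → Finset (Fin n) :=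
      fun j => Finset.univ.filter (fun y : Fin n => blk S y.val = j.val) with hB
    have hcard : ∀ j, (A j).card = (B j).card := hf.2
    set F : Fin n → Fin n → Fin n := fun j x =>
      if hx : x ∈ B j then
        (A j).orderEmbOfFin (hcard j) (((B j).orderIsoOfFin rfl).symm ⟨x, hx⟩)
      else x with hF
    have hmemF : ∀ j x, x ∈ B j → F j x ∈ A j := by
      intro j x hx
      rw [hF]
      simp only [dif_pos hx]
      exact Finset.orderEmbOfFin_mem _ _ _
    have hinjF : ∀ j x y, x ∈ B j → y ∈ B j → F j x = F j y → x = y := by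
      intro j x y hx hy h
      rw [hF] at h
      simp only [dif_pos hx, dif_pos hy] at h
      have h1 := ((A j).orderEmbOfFin (hcard j)).injective h
      have h2 := ((B j).orderIsoOfFin rfl).symm.injective h1
      exact congrArg Subtype.val h2
    have hmonoF : ∀ j x y, ∀ hx : x ∈ B j, ∀ hy : y ∈ B j, x < y → F j x < F j y := by
      intro j x y hx hy hxy
      rw [hF]
      simp only [dif_pos hx, dif_pos hy]
      apply ((A j).orderEmbOfFin (hcard j)).strictMono
      apply ((B j).orderIsoOfFin rfl).symm.strictMono
      exact Subtype.mk_lt_mk.mpr hxy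
    have hmemB : ∀ x : Fin n, x ∈ B (jdx x) := by
      intro x; simp [hB, hjdx]
    set π₀ : Fin n → Fin n := fun x => F (jdx x) x with hπ₀
    have hstar : ∀ x, f (π₀ x) = jdx x := by
      intro x
      have := hmemF (jdx x) x (hmemB x)
      simp only [hA, Finset.mem_filter] at this
      exact this.2
    have hinj : Function.Injective π₀ := by
      intro x y h
      have hj : jdx x = jdx y := by rw [← hstar x, ← hstar y, h]
      apply hinjF (jdx x) x y (hmemB x) (hj ▸ hmemB y)
      change F (jdx x) x = F (jdx y) y at h
      rw [h, hj]
    have hbij : Function.Bijective π₀ := Finite.injective_iff_bijective.mp hinj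
    set π : Equiv.Perm (Fin n) := Equiv.ofBijective π₀ hbij with hπdef
    refine ⟨π, ?_, ?_⟩
    · simp only [Finset.mem_filter, Finset.mem_univ, true_and]
      rw [descSet_subset_iff S]
      intro x y hxy hblk
      have hj : jdx x = jdx y := by rw [hjdx]; exact Fin.ext hblk
      have : F (jdx x) x < F (jdx x) y := hmonoF (jdx x) x y (hmemB x) (hj ▸ hmemB y) hxy
      show π₀ x < π₀ y
      rw [hπ₀]
      simpa [hj] using this
    · funext v
      have hv : π (π.symm v) = v := Equiv.apply_symm_apply _ _
      have : f v = jdx (π.symm v) := by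
        conv_lhs => rw [← hv]
        exact hstar (π.symm v)
      simp only [henc]
      rw [this]

lemma card_filter_comp {n r q : ℕ} (u : Fin n → Fin r)
    (hu : ∀ y, (Finset.univ.filter (fun x => u x = y)).card = q)
    (P : Fin r → Prop) [DecidablePred P] :
    (Finset.univ.filter (fun x => P (u x))).card = q * (Finset.univ.filter P).card := by
  classical
  rw [Finset.card_eq_sum_card_fiberwise
    (f := u) (t := Finset.univ.filter P)
    (fun x hx => by simp only [Finset.mem_coe, Finset.mem_filter, Finset.mem_univ, true_and] at hx ⊢; exact hx)]
  have key : ∀ y ∈ Finset.univ.filter P,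
      ((Finset.univ.filter (fun x => P (u x))).filter (fun a => u a = y)).card = q := by
    intro y hy
    simp only [Finset.mem_filter, Finset.mem_univ, true_and] at hy
    rw [← hu y]
    congr 1
    ext x
    simp only [Finset.mem_filter, Finset.mem_univ, true_and]
    constructor
    · rintro ⟨_, h⟩; exact h
    · intro h; exact ⟨by rw [h]; exact hy, h⟩
  rw [Finset.sum_congr rfl key, Finset.sum_const, smul_eq_mul, mul_comm]

lemma card_fiber_mod {n r q : ℕ} (hn : n = r * q) (hr : 0 < r) (hq : 0 < q) (y : Fin r) :
    (Finset.univ.filter (fun x : Fin n => x.val % r = y.val)).card = q := by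
  have key : (Finset.univ.filter (fun x : Fin n => x.val % r = y.val)).card
      = (Finset.univ : Finset (Fin q)).card := by
    apply Finset.card_nbij' (i := fun x => (⟨x.val / r, by
        rw [Nat.div_lt_iff_lt_mul hr, Nat.mul_comm, ← hn]; exact x.isLt⟩ : Fin q))
      (j := fun k => (⟨y.val + k.val * r, by
        have h3 : (k.val + 1) * r ≤ q * r := Nat.mul_le_mul_right r k.isLt
        have h4 : y.val + k.val * r < (k.val + 1) * r := by
          rw [Nat.add_mul, Nat.one_mul]; have := y.isLt; omega
        have h5 : q * r = r * q := Nat.mul_comm q r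
        rw [hn]; omega⟩ : Fin n))
    · intro a _; simp
    · intro k _
      simp only [Finset.mem_coe, Finset.mem_filter, Finset.mem_univ, true_and]
      rw [Nat.add_mul_mod_self_right, Nat.mod_eq_of_lt y.isLt]
    · intro a ha
      simp only [Finset.mem_coe, Finset.mem_filter, Finset.mem_univ, true_and] at ha
      apply Fin.ext
      simp only
      rw [← ha, Nat.mod_add_div' a.val r]
    · intro k _
      apply Fin.ext
      simp only
      rw [Nat.add_mul_div_right _ _ hr, Nat.div_eq_of_lt y.isLt, Nat.zero_add]
  rw [key]; simp

lemma card_fiber_div {n r q : ℕ} (hn : n = r * q) (hr : 0 < r) (hq : 0 < q) (y : Fin r) :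
    (Finset.univ.filter (fun x : Fin n => x.val / q = y.val)).card = q := by
  have key : (Finset.univ.filter (fun x : Fin n => x.val / q = y.val)).card
      = (Finset.univ : Finset (Fin q)).card := by
    apply Finset.card_nbij' (i := fun x => (⟨x.val % q, Nat.mod_lt _ hq⟩ : Fin q))
      (j := fun k => (⟨q * y.val + k.val, by
        have h1 := y.isLt
        have h2 := k.isLt
        calc q * y.val + k.val < q * y.val + q := by omega
          _ = q * (y.val + 1) := by ring
          _ ≤ q * r := Nat.mul_le_mul_left q h1
          _ = n := by rw [hn, Nat.mul_comm]⟩ : Fin n))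
    · intro a _; simp
    · intro k _
      simp only [Finset.mem_coe, Finset.mem_filter, Finset.mem_univ, true_and]
      rw [Nat.mul_add_div hq, Nat.div_eq_of_lt k.isLt, Nat.add_zero]
    · intro a ha
      simp only [Finset.mem_coe, Finset.mem_filter, Finset.mem_univ, true_and] at ha
      apply Fin.ext
      simp only
      rw [← ha, Nat.div_add_mod a.val q]
    · intro k _
      apply Fin.ext
      simp only
      rw [Nat.mul_add_mod, Nat.mod_eq_of_lt k.isLt]
  rw [key]; simp

lemma blk_div {S : Finset ℕ} {q : ℕ} (hq : 0 < q) (hdvd : ∀ s ∈ S, q ∣ s) (x : ℕ) :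
    blk S x = blk (S.image (· / q)) (x / q) := by
  unfold blk
  apply Finset.card_nbij (i := (· / q))
  · intro s hs
    rw [Finset.mem_coe, Finset.mem_filter] at hs
    rw [Finset.mem_coe, Finset.mem_filter]
    exact ⟨Finset.mem_image_of_mem _ hs.1, Nat.div_le_div_right hs.2⟩
  · intro s₁ h₁ s₂ h₂ h
    rw [Finset.mem_coe, Finset.mem_filter] at h₁ h₂
    have h' : s₁ / q = s₂ / q := h
    have d₁ := hdvd s₁ h₁.1
    have d₂ := hdvd s₂ h₂.1
    rw [← Nat.div_mul_cancel d₁, ← Nat.div_mul_cancel d₂, h']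
  · intro v hv
    rw [Finset.mem_coe, Finset.mem_filter, Finset.mem_image] at hv
    obtain ⟨⟨s, hs, rfl⟩, hle⟩ := hv
    refine ⟨s, ?_, rfl⟩
    rw [Finset.mem_coe, Finset.mem_filter]
    refine ⟨hs, ?_⟩
    calc s = q * (s / q) := (Nat.mul_div_cancel' (hdvd s hs)).symm
      _ ≤ q * (x / q) := Nat.mul_le_mul_left q hle
      _ ≤ x := by rw [Nat.mul_comm]; exact Nat.div_mul_le_self x q

lemma card_blk_fiber {n r q : ℕ} (hn : n = r * q) (hr : 0 < r) (hq : 0 < q) (S : Finset ℕ)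
    (hdvd : ∀ s ∈ S, q ∣ s) (j : ℕ) :
    (Finset.univ.filter (fun x : Fin n => blk S x.val = j)).card
      = q * (Finset.univ.filter (fun y : Fin r => blk (S.image (· / q)) y.val = j)).card := by
  have hult : ∀ x : Fin n, x.val / q < r := by
    intro x; rw [Nat.div_lt_iff_lt_mul hq, ← hn]; exact x.isLt
  set u : Fin n → Fin r := fun x => ⟨x.val / q, hult x⟩ with hudef
  have hfib : ∀ y : Fin r, (Finset.univ.filter (fun x => u x = y)).card = q := by
    intro y
    rw [show (Finset.univ.filter (fun x => u x = y))
        = Finset.univ.filter (fun x : Fin n => x.val / q = y.val) from ?_]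
    · exact card_fiber_div hn hr hq y
    · apply Finset.filter_congr
      intro x _
      simp [hudef, Fin.ext_iff]
  have key := card_filter_comp u hfib (fun y => blk (S.image (· / q)) y.val = j)
  rw [← key]
  congr 1
  apply Finset.filter_congr
  intro x _
  rw [blk_div hq hdvd x.val]

lemma addRight_pow {A : Type*} [AddCommGroup A] (a : A) (k : ℕ) :
    (Equiv.addRight a) ^ k = Equiv.addRight (k • a) := by
  induction k with
  | zero => ext x; simp
  | succ k ih =>
    ext x
    rw [pow_succ, Equiv.Perm.mul_apply, ih]
    simp [succ_nsmul, add_assoc, add_comm]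

lemma fixed_mod_reduce {n r : ℕ} [NeZero n] (hr : 0 < r)
    (f : Fin n → Fin n) (hf : ∀ x : Fin n, f (x + (r : Fin n)) = f x) :
    ∀ (x : Fin n) (h : x.val % r < n), f x = f ⟨x.val % r, h⟩ := by
  suffices key : ∀ m, ∀ x : Fin n, x.val = m → ∀ h : x.val % r < n, f x = f ⟨x.val % r, h⟩ by
    exact fun x h => key x.val x rfl h
  intro m
  induction m using Nat.strong_induction_on with
  | _ m ih =>
    intro x hxm h
    by_cases hlt : x.val < r
    · have hmod : x.val % r = x.val := Nat.mod_eq_of_lt hlt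
      congr 1
      exact (Fin.ext hmod).symm
    · have hrx : r ≤ x.val := not_lt.mp hlt
      have hrltn : r < n := lt_of_le_of_lt hrx x.isLt
      set x' : Fin n := ⟨x.val - r, by omega⟩ with hx'
      have hσ : x' + (r : Fin n) = x := by
        apply Fin.ext
        rw [Fin.val_add, Fin.val_natCast, Nat.mod_eq_of_lt hrltn]
        show (x.val - r + r) % n = x.val
        rw [Nat.sub_add_cancel hrx, Nat.mod_eq_of_lt x.isLt]
      have h1 : f x = f x' := by rw [← hσ, hf x']
      have h2 : x'.val % r = x.val % r := by
        show (x.val - r) % r = x.val % r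
        conv_rhs => rw [← Nat.sub_add_cancel hrx]
        rw [Nat.add_mod_right]
      have h3 := ih x'.val (by simp only [hx']; omega) x' rfl (by rw [h2]; exact h)
      rw [h1, h3]
      congr 1
      exact Fin.ext h2

lemma card_filter_val_lt {n m : ℕ} (hm : m ≤ n) :
    (Finset.univ.filter (fun x : Fin n => x.val < m)).card = m := by
  have key : (Finset.univ.filter (fun x : Fin n => x.val < m)).card = (Finset.range m).card := by
    apply Finset.card_bij (fun (a : Fin n) _ => a.val)
    · intro a ha
      simp only [Finset.mem_filter, Finset.mem_univ, true_and] at ha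
      exact Finset.mem_range.mpr ha
    · intro a _ b _ hab
      exact Fin.ext hab
    · intro b hb
      rw [Finset.mem_range] at hb
      exact ⟨⟨b, lt_of_lt_of_le hb hm⟩, by simp [hb], rfl⟩
  rw [key, Finset.card_range]

lemma Xcard_modEq (p t r n : ℕ) (hp : p.Prime) (hr : 0 < r) (hn : n = r * p ^ t)
    (S : Finset ℕ) (hS : S ⊆ Finset.Icc 1 (n - 1)) :
    ((Xset n S).card : ZMod p)
      = if ∀ s ∈ S, p ^ t ∣ s then ((Xset r (S.image (· / p ^ t))).card : ZMod p) else 0 := by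
  classical
  set q := p ^ t with hqdef
  have hq : 0 < q := pow_pos hp.pos t
  have hn0 : 0 < n := by rw [hn]; exact Nat.mul_pos hr hq
  haveI : NeZero n := ⟨by omega⟩
  have hrn : r ≤ n := by rw [hn]; exact Nat.le_mul_of_pos_right r hq
  set σ : Equiv.Perm (Fin n) := Equiv.addRight ((r : ℕ) : Fin n) with hσdef
  have hσapp : ∀ x, σ x = x + ((r : ℕ) : Fin n) := fun x => rfl
  have hσq : σ ^ q = 1 := by
    rw [hσdef, addRight_pow]
    have hz : (q • ((r : ℕ) : Fin n)) = 0 := by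
      open Fin.CommRing in rw [nsmul_eq_mul, ← Nat.cast_mul, show q * r = n by rw [hn, Nat.mul_comm],
        Fin.natCast_self]
    rw [hz]
    ext x
    simp
  set G := Subgroup.zpowers σ with hGdef
  have hG_p : IsPGroup p G := by
    intro g
    refine ⟨t, ?_⟩
    obtain ⟨g, hg⟩ := g
    rw [Subgroup.mem_zpowers_iff] at hg
    obtain ⟨m, hm⟩ := hg
    have : g ^ q = 1 := by
      rw [← hm, ← zpow_natCast, ← zpow_mul, mul_comm, zpow_mul, zpow_natCast, hσq, one_zpow]
    apply Subtype.ext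
    rw [SubmonoidClass.coe_pow]
    exact this
  -- the action
  set Y := {f : Fin n → Fin n // f ∈ Xset n S} with hYdef
  have hcomp : ∀ (f : Fin n → Fin n), f ∈ Xset n S → ∀ τ : Equiv.Perm (Fin n),
      (f ∘ τ) ∈ Xset n S := by
    intro f hf τ
    rw [Xset, Finset.mem_filter] at hf ⊢
    refine ⟨Finset.mem_univ _, fun j => ?_⟩
    rw [← hf.2 j]
    apply Finset.card_nbij' (i := fun x => τ x) (j := fun y => τ.symm y)
    · intro a ha
      simp only [Finset.mem_coe, Finset.mem_filter, Finset.mem_univ, true_and, Function.comp_apply] at ha ⊢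
      exact ha
    · intro a ha
      simp only [Finset.mem_coe, Finset.mem_filter, Finset.mem_univ, true_and, Function.comp_apply] at ha ⊢
      simpa using ha
    · intro a _; simp
    · intro a _; simp
  letI : SMul G Y := ⟨fun g f => ⟨f.1 ∘ ((g⁻¹ : G) : Equiv.Perm (Fin n)), hcomp f.1 f.2 _⟩⟩
  have hsmul_def : ∀ (g : G) (f : Y), (g • f).1 = f.1 ∘ ((g⁻¹ : G) : Equiv.Perm (Fin n)) :=
    fun g f => rfl
  letI : MulAction G Y := {
    one_smul := by
      intro f
      apply Subtype.ext
      rw [hsmul_def]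
      funext x
      simp
    mul_smul := by
      intro g h f
      apply Subtype.ext
      rw [hsmul_def, hsmul_def, hsmul_def]
      funext x
      simp [mul_inv_rev] }
  haveI : Fact p.Prime := ⟨hp⟩
  have hmod := hG_p.card_modEq_card_fixedPoints Y
  have hcard1 : Nat.card Y = (Xset n S).card := by
    rw [Nat.card_eq_fintype_card]
    exact Fintype.card_coe _
  -- fixed points
  set Fix : Finset (Fin n → Fin n) :=
    (Xset n S).filter (fun f => ∀ x, f (x + ((r : ℕ) : Fin n)) = f x) with hFixdef
  have hfix_iff : ∀ y : Y, y ∈ MulAction.fixedPoints G Y ↔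
      ∀ x : Fin n, y.1 (x + ((r : ℕ) : Fin n)) = y.1 x := by
    intro y
    constructor
    · intro h x
      have h1 := h ⟨σ⁻¹, Subgroup.inv_mem _ (Subgroup.mem_zpowers σ)⟩
      have h2 := congrArg Subtype.val h1
      rw [hsmul_def] at h2
      have h3 := congrFun h2 x
      simp only [Function.comp_apply] at h3
      rw [← hσapp x]
      exact h3
    · intro h g
      have hσfix : ∀ (m : ℤ) (x : Fin n), y.1 ((σ ^ m) x) = y.1 x := by
        intro m
        induction m using Int.induction_on with
        | zero => intro x; simp
        | succ k ih =>
          intro x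
          have : (σ ^ ((k : ℤ) + 1)) x = (σ ^ (k : ℤ)) (σ x) := by
            rw [zpow_add_one, Equiv.Perm.mul_apply]
          rw [this, ih (σ x), hσapp, h]
        | pred k ih =>
          intro x
          have : (σ ^ (-(k : ℤ) - 1)) x = (σ ^ (-(k : ℤ))) (σ⁻¹ x) := by
            rw [zpow_sub_one, Equiv.Perm.mul_apply]
          rw [this, ih (σ⁻¹ x)]
          have h4 := h (σ⁻¹ x)
          rw [← hσapp (σ⁻¹ x)] at h4
          rw [show σ (σ⁻¹ x) = x from σ.apply_symm_apply x] at h4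
          rw [h4]
      apply Subtype.ext
      rw [hsmul_def]
      obtain ⟨g, hg⟩ := g
      obtain ⟨m, hm⟩ := Subgroup.mem_zpowers_iff.mp hg
      funext x
      simp only [Function.comp_apply]
      rw [show ((⟨g, hg⟩⁻¹ : G) : Equiv.Perm (Fin n)) = g⁻¹ from rfl, ← hm, ← zpow_neg]
      exact hσfix (-m) x
  have hcard2 : Nat.card (MulAction.fixedPoints G Y) = Fix.card := by
    have hFixmem : ∀ f : Fin n → Fin n, f ∈ Fix ↔
        f ∈ Xset n S ∧ ∀ x, f (x + ((r : ℕ) : Fin n)) = f x := by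
      intro f
      rw [hFixdef, Finset.mem_filter]
    have e : MulAction.fixedPoints G Y ≃ {f : Fin n → Fin n // f ∈ Fix} := {
      toFun := fun y => ⟨y.1.1, (hFixmem _).mpr ⟨y.1.2, (hfix_iff y.1).mp y.2⟩⟩
      invFun := fun f => ⟨⟨f.1, ((hFixmem _).mp f.2).1⟩,
        (hfix_iff ⟨f.1, ((hFixmem _).mp f.2).1⟩).mpr (fun x => ((hFixmem _).mp f.2).2 x)⟩
      left_inv := fun y => rfl
      right_inv := fun f => rfl }
    rw [Nat.card_congr e, Nat.card_eq_fintype_card]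
    exact Fintype.card_coe _
  have hmain : ((Xset n S).card : ZMod p) = (Fix.card : ZMod p) := by
    rw [← hcard1, ← hcard2]
    exact (ZMod.natCast_eq_natCast_iff _ _ _).mpr hmod
  rw [hmain]
  -- common auxiliary maps
  set u₁ : Fin n → Fin r := fun x => ⟨x.val % r, Nat.mod_lt _ hr⟩ with hu₁def
  set emb : Fin r → Fin n := fun y => ⟨y.val, lt_of_lt_of_le y.isLt hrn⟩ with hembdef
  have hu₁fib : ∀ y : Fin r, (Finset.univ.filter (fun x : Fin n => u₁ x = y)).card = q := by
    intro y
    rw [show (Finset.univ.filter (fun x : Fin n => u₁ x = y))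
        = Finset.univ.filter (fun x : Fin n => x.val % r = y.val) from
      Finset.filter_congr (fun x _ => by simp [hu₁def, Fin.ext_iff])]
    exact card_fiber_mod hn hr hq y
  have hembu₁ : ∀ x : Fin n, (emb (u₁ x)).val = x.val % r := fun x => rfl
  have hu₁emb : ∀ y : Fin r, u₁ (emb y) = y := by
    intro y
    apply Fin.ext
    show y.val % r = y.val
    exact Nat.mod_eq_of_lt y.isLt
  by_cases hdiv : ∀ s ∈ S, q ∣ s
  · rw [if_pos hdiv]
    congr 1
    set S' := S.image (· / q) with hS'def
    have hS'sub : S' ⊆ Finset.Icc 1 (r - 1) := by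
      intro s' hs'
      rw [hS'def, Finset.mem_image] at hs'
      obtain ⟨sv, hsv, rfl⟩ := hs'
      have h1 := hS hsv
      rw [Finset.mem_Icc] at h1 ⊢
      have hd := hdiv sv hsv
      have hq_le : q ≤ sv := Nat.le_of_dvd (by omega) hd
      have h2 : sv / q < r := by
        rw [Nat.div_lt_iff_lt_mul hq, ← hn]; omega
      have h3 : 1 ≤ sv / q := by
        rw [Nat.one_le_div_iff hq]; exact hq_le
      omega
    have hval_lt : ∀ f ∈ Xset n S, ∀ x : Fin n, (f x).val < r := by
      intro f hf x
      rw [Xset, Finset.mem_filter] at hf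
      have h1 := hf.2 (f x)
      have h2 : 0 < (Finset.univ.filter (fun y : Fin n => f y = f x)).card :=
        Finset.card_pos.mpr ⟨x, by simp⟩
      rw [h1] at h2
      obtain ⟨x₀, hx₀⟩ := Finset.card_pos.mp h2
      simp only [Finset.mem_filter, Finset.mem_univ, true_and] at hx₀
      rw [← hx₀, blk_div hq hdiv]
      exact blk_lt hr hS'sub _
    set Φ : (Fin n → Fin n) → (Fin r → Fin r) := fun f y => u₁ (f (emb y)) with hΦdef
    set Ψ : (Fin r → Fin r) → (Fin n → Fin n) := fun g x => emb (g (u₁ x)) with hΨdef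
    -- key counting identity for fixed f
    have keyA : ∀ f ∈ Fix, ∀ j' : Fin r,
        (Finset.univ.filter (fun x : Fin n => f x = emb j')).card
          = q * (Finset.univ.filter (fun y : Fin r => Φ f y = j')).card := by
      intro f hf j'
      have hfX := (Finset.mem_filter.mp hf).1
      have hffix := (Finset.mem_filter.mp hf).2
      have hred := fixed_mod_reduce hr f hffix
      rw [show (Finset.univ.filter (fun x : Fin n => f x = emb j'))
          = Finset.univ.filter (fun x : Fin n => Φ f (u₁ x) = j') from ?_]
      · exact card_filter_comp u₁ hu₁fib (fun y => Φ f y = j')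
      · apply Finset.filter_congr
        intro x _
        have h1 : f (emb (u₁ x)) = f x := (hred x (lt_of_lt_of_le (Nat.mod_lt _ hr) hrn)).symm
        have h2 : (f x).val < r := hval_lt f hfX x
        simp only [hΦdef]
        rw [h1]
        constructor
        · intro h
          rw [h, hu₁emb j']
        · intro h
          have h3 := congrArg Fin.val h
          apply Fin.ext
          show (f x).val = j'.val
          rw [← h3]
          exact (Nat.mod_eq_of_lt h2).symm
    -- the bijection
    apply Finset.card_nbij' (i := Φ) (j := Ψ)
    · -- Φ maps Fix into Xset r S'
      intro f hf
      have hfX := (Finset.mem_filter.mp hf).1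
      rw [Xset, Finset.mem_coe, Finset.mem_filter]
      refine ⟨Finset.mem_univ _, fun j' => ?_⟩
      apply Nat.eq_of_mul_eq_mul_left hq
      rw [← keyA f hf j']
      have hXj := (Finset.mem_filter.mp (by rw [Xset] at hfX; exact hfX : f ∈
        Finset.univ.filter (fun f => ∀ j : Fin n,
          (Finset.univ.filter (fun x => f x = j)).card
            = (Finset.univ.filter (fun x : Fin n => blk S x.val = j.val)).card))).2 (emb j')
      rw [hXj]
      rw [show (Finset.univ.filter (fun x : Fin n => blk S x.val = (emb j').val))
          = Finset.univ.filter (fun x : Fin n => blk S x.val = j'.val) from rfl]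
      rw [card_blk_fiber hn hr hq S hdiv j'.val]
    · -- Ψ maps Xset r S' into Fix
      intro g hg
      have hg2 := (Finset.mem_filter.mp (by rw [Xset] at hg; exact hg : g ∈
        Finset.univ.filter (fun g => ∀ j : Fin r,
          (Finset.univ.filter (fun y => g y = j)).card
            = (Finset.univ.filter (fun y : Fin r => blk S' y.val = j.val)).card))).2
      rw [hFixdef, Finset.mem_coe, Finset.mem_filter]
      constructor
      · -- Ψ g ∈ Xset n S
        rw [Xset, Finset.mem_filter]
        refine ⟨Finset.mem_univ _, fun jn => ?_⟩
        by_cases hjr : jn.val < r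
        · have h1 : (Finset.univ.filter (fun x : Fin n => Ψ g x = jn))
              = Finset.univ.filter (fun x : Fin n => g (u₁ x) = ⟨jn.val, hjr⟩) := by
            apply Finset.filter_congr
            intro x _
            simp only [hΨdef]
            constructor
            · intro h
              have h' : (emb (g (u₁ x))).val = jn.val := congrArg Fin.val h
              exact Fin.ext h'
            · intro h
              have h' : (g (u₁ x)).val = (⟨jn.val, hjr⟩ : Fin r).val := congrArg Fin.val h
              exact Fin.ext h'
          rw [h1, card_filter_comp u₁ hu₁fib (fun y => g y = ⟨jn.val, hjr⟩),
            hg2 ⟨jn.val, hjr⟩, ← card_blk_fiber hn hr hq S hdiv jn.val]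
        · have h1 : (Finset.univ.filter (fun x : Fin n => Ψ g x = jn)) = ∅ := by
            rw [Finset.filter_eq_empty_iff]
            intro x _
            intro hcon
            have := congrArg Fin.val hcon
            have hlt : (emb (g (u₁ x))).val < r := (g (u₁ x)).isLt
            rw [show Ψ g x = emb (g (u₁ x)) from rfl] at hcon
            have := congrArg Fin.val hcon
            omega
          have h2 : (Finset.univ.filter (fun x : Fin n => blk S x.val = jn.val)) = ∅ := by
            rw [Finset.filter_eq_empty_iff]
            intro x _
            rw [blk_div hq hdiv, ← hS'def]
            have := blk_lt hr hS'sub (x.val / q)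
            omega
          rw [h1, h2]
      · -- Ψ g is fixed
        intro x
        have hmm : (x + ((r : ℕ) : Fin n)).val % r = x.val % r := by
          rw [Fin.val_add, Fin.val_natCast]
          have hrdvdn : r ∣ n := ⟨q, hn⟩
          rw [Nat.mod_mod_of_dvd _ hrdvdn, Nat.add_mod, Nat.mod_mod_of_dvd r hrdvdn,
            Nat.mod_self, Nat.add_zero, Nat.mod_mod_of_dvd _ (dvd_refl r)]
        show emb (g (u₁ (x + _))) = emb (g (u₁ x))
        congr 2
        exact Fin.ext hmm
    · -- left inverse
      intro f hf
      have hfX := (Finset.mem_filter.mp hf).1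
      have hffix := (Finset.mem_filter.mp hf).2
      have hred := fixed_mod_reduce hr f hffix
      funext x
      show emb (u₁ (f (emb (u₁ x)))) = f x
      have h1 : f (emb (u₁ x)) = f x := (hred x (lt_of_lt_of_le (Nat.mod_lt _ hr) hrn)).symm
      rw [h1]
      apply Fin.ext
      show (f x).val % r = (f x).val
      exact Nat.mod_eq_of_lt (hval_lt f hfX x)
    · -- right inverse
      intro g _
      funext y
      show u₁ (emb (g (u₁ (emb y)))) = g y
      rw [hu₁emb y, hu₁emb (g y)]
  · rw [if_neg hdiv]
    push_neg at hdiv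
    obtain ⟨s₀, hs₀S, hs₀nd⟩ := hdiv
    have hFixempty : Fix = ∅ := by
      rw [Finset.eq_empty_iff_forall_notMem]
      intro f hf
      have hfX := (Finset.mem_filter.mp hf).1
      have hffix := (Finset.mem_filter.mp hf).2
      have hred := fixed_mod_reduce hr f hffix
      rw [Xset, Finset.mem_filter] at hfX
      have hfX2 := hfX.2
      have hfib : ∀ m : ℕ, q ∣ (Finset.univ.filter (fun x : Fin n => blk S x.val = m)).card := by
        intro m
        by_cases hm : m < n
        · rw [← hfX2 ⟨m, hm⟩]
          rw [show (Finset.univ.filter (fun x : Fin n => f x = ⟨m, hm⟩))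
              = Finset.univ.filter (fun x : Fin n => f (emb (u₁ x)) = ⟨m, hm⟩) from
            Finset.filter_congr (fun x _ => by
              rw [show f (emb (u₁ x)) = f x from
                (hred x (lt_of_lt_of_le (Nat.mod_lt _ hr) hrn)).symm])]
          rw [card_filter_comp u₁ hu₁fib (fun y => f (emb y) = ⟨m, hm⟩)]
          exact Dvd.intro _ rfl
        · rw [Finset.card_eq_zero.mpr]
          · exact dvd_zero q
          · rw [Finset.filter_eq_empty_iff]
            intro x _
            have := blk_lt hn0 hS x.val
            omega
      have hcum : ∀ m : ℕ, q ∣ (Finset.univ.filter (fun x : Fin n => blk S x.val < m)).card := by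
        intro m
        induction m with
        | zero => simp
        | succ m ih =>
          have hsplit : (Finset.univ.filter (fun x : Fin n => blk S x.val < m + 1))
              = (Finset.univ.filter (fun x : Fin n => blk S x.val < m))
                ∪ (Finset.univ.filter (fun x : Fin n => blk S x.val = m)) := by
            ext x
            simp only [Finset.mem_filter, Finset.mem_univ, true_and, Finset.mem_union]
            omega
          rw [hsplit, Finset.card_union_of_disjoint]
          · exact dvd_add ih (hfib m)
          · rw [Finset.disjoint_left]
            intro a ha hb
            simp only [Finset.mem_filter, Finset.mem_univ, true_and] at ha hb
            omega
      have hs₀ := hS hs₀S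
      rw [Finset.mem_Icc] at hs₀
      have hiff : ∀ x : Fin n, blk S x.val < blk S s₀ ↔ x.val < s₀ := by
        intro x
        constructor
        · intro hlt
          by_contra hge
          push_neg at hge
          exact absurd hlt (not_lt.mpr (blk_mono S hge))
        · intro hlt
          have hstep := blk_step S (i := s₀) (by omega)
          rw [if_pos hs₀S] at hstep
          have := blk_mono S (show x.val ≤ s₀ - 1 by omega)
          omega
      have hcard : (Finset.univ.filter (fun x : Fin n => blk S x.val < blk S s₀)).card = s₀ := by
        rw [show (Finset.univ.filter (fun x : Fin n => blk S x.val < blk S s₀))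
            = Finset.univ.filter (fun x : Fin n => x.val < s₀) from
          Finset.filter_congr (fun x _ => by simp [hiff x])]
        exact card_filter_val_lt (by omega)
      exact hs₀nd (hcard ▸ hcum (blk S s₀))
    rw [hFixempty]
    simp

lemma descAlpha_eq_sum_descBeta (n : ℕ) (U : Finset ℕ) :
    descAlpha n U = ∑ T ∈ U.powerset, descBeta n T := by
  classical
  rw [descAlpha, Finset.card_eq_sum_card_fiberwise (f := descSet n) (t := U.powerset)
    (fun π hπ => by
      simp only [Finset.mem_coe, Finset.mem_filter, Finset.mem_univ, true_and] at hπ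
      exact Finset.mem_powerset.mpr hπ)]
  apply Finset.sum_congr rfl
  intro T hT
  rw [Finset.mem_powerset] at hT
  rw [descBeta]
  congr 1
  ext π
  simp only [Finset.mem_filter, Finset.mem_univ, true_and]
  constructor
  · rintro ⟨_, h⟩; exact h
  · intro h; exact ⟨h ▸ hT, h⟩

lemma moebius_powerset {R : Type*} [CommRing R] (β : Finset ℕ → R) (S : Finset ℕ) :
    ∑ T ∈ S.powerset, (-1 : R) ^ ((S \ T).card) * (∑ U ∈ T.powerset, β U) = β S := by
  classical
  have step1 : ∀ T ∈ S.powerset, (-1 : R) ^ ((S \ T).card) * (∑ U ∈ T.powerset, β U)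
      = ∑ U ∈ S.powerset, (if U ⊆ T then (-1 : R) ^ ((S \ T).card) * β U else 0) := by
    intro T hT
    rw [Finset.mem_powerset] at hT
    rw [Finset.mul_sum, ← Finset.sum_filter]
    apply Finset.sum_congr _ (fun _ _ => rfl)
    ext U
    simp only [Finset.mem_filter, Finset.mem_powerset]
    exact ⟨fun h => ⟨h.trans hT, h⟩, fun h => h.2⟩
  rw [Finset.sum_congr rfl step1, Finset.sum_comm]
  have step2 : ∀ U ∈ S.powerset,
      (∑ T ∈ S.powerset, if U ⊆ T then (-1 : R) ^ ((S \ T).card) * β U else 0)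
        = (if U = S then 1 else 0) * β U := by
    intro U hU
    rw [Finset.mem_powerset] at hU
    have e1 : (∑ T ∈ S.powerset, if U ⊆ T then (-1 : R) ^ ((S \ T).card) * β U else 0)
        = (∑ T ∈ S.powerset.filter (fun T => U ⊆ T), (-1 : R) ^ ((S \ T).card)) * β U := by
      rw [← Finset.sum_filter, Finset.sum_mul]
    rw [e1]
    congr 1
    have e2 : (∑ T ∈ S.powerset.filter (fun T => U ⊆ T), (-1 : R) ^ ((S \ T).card))
        = ∑ W ∈ (S \ U).powerset, (-1 : R) ^ (((S \ U) \ W).card) := by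
      apply Finset.sum_nbij' (i := fun T => T \ U) (j := fun W => U ∪ W)
      · intro T hT
        simp only [Finset.mem_filter, Finset.mem_powerset] at hT
        exact Finset.mem_powerset.mpr (Finset.sdiff_subset_sdiff hT.1 (Finset.Subset.refl U))
      · intro W hW
        rw [Finset.mem_powerset] at hW
        simp only [Finset.mem_filter, Finset.mem_powerset]
        exact ⟨Finset.union_subset hU (hW.trans Finset.sdiff_subset),
          Finset.subset_union_left⟩
      · intro T hT
        simp only [Finset.mem_filter, Finset.mem_powerset] at hT
        exact Finset.union_sdiff_of_subset hT.2
      · intro W hW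
        rw [Finset.mem_powerset] at hW
        apply Finset.union_sdiff_cancel_left
        rw [Finset.disjoint_right]
        intro a haW
        exact (Finset.mem_sdiff.mp (hW haW)).2
      · intro T hT
        simp only [Finset.mem_filter, Finset.mem_powerset] at hT
        congr 2
        ext a
        simp only [Finset.mem_sdiff]
        constructor
        · intro ⟨haS, haT⟩
          exact ⟨⟨haS, fun haU => haT (hT.2 haU)⟩, fun hcon => haT hcon.1⟩
        · intro ⟨⟨haS, haU⟩, hcon⟩
          refine ⟨haS, fun haT => hcon ⟨haT, haU⟩⟩
    rw [e2]
    have e3 : ∀ W ∈ (S \ U).powerset,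
        (-1 : R) ^ (((S \ U) \ W).card) = (-1) ^ ((S \ U).card) * (-1) ^ (W.card) := by
      intro W hW
      rw [Finset.mem_powerset] at hW
      rw [Finset.card_sdiff_of_subset hW]
      have hwa : W.card ≤ (S \ U).card := Finset.card_le_card hW
      have h2 : ((-1 : R) ^ W.card) * ((-1) ^ W.card) = 1 := by
        rw [← pow_add]
        exact Even.neg_one_pow ⟨W.card, rfl⟩
      calc (-1 : R) ^ ((S \ U).card - W.card)
          = (-1) ^ ((S \ U).card - W.card) * (((-1 : R) ^ W.card) * ((-1) ^ W.card)) := by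
            rw [h2, mul_one]
        _ = ((-1) ^ ((S \ U).card - W.card) * (-1) ^ W.card) * (-1) ^ W.card := by ring
        _ = (-1) ^ ((S \ U).card - W.card + W.card) * (-1) ^ W.card := by rw [pow_add]
        _ = (-1) ^ ((S \ U).card) * (-1) ^ W.card := by rw [Nat.sub_add_cancel hwa]
    rw [Finset.sum_congr rfl e3, ← Finset.mul_sum]
    have e4 : (∑ W ∈ (S \ U).powerset, (-1 : R) ^ (W.card)) = if (S \ U) = ∅ then 1 else 0 := by
      have hZ := Finset.sum_powerset_neg_one_pow_card (α := ℕ) (x := S \ U)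
      have hcast := congrArg (fun z : ℤ => (z : R)) hZ
      push_cast at hcast
      rw [hcast]
    rw [e4]
    by_cases hUS : U = S
    · rw [if_pos hUS, if_pos (by rw [hUS, Finset.sdiff_self]), hUS, Finset.sdiff_self]
      simp
    · rw [if_neg hUS, if_neg, mul_zero]
      intro hcon
      rw [Finset.sdiff_eq_empty_iff_subset] at hcon
      exact hUS (Finset.Subset.antisymm hU hcon)
  rw [Finset.sum_congr rfl step2]
  simp only [ite_mul, one_mul, zero_mul]
  rw [Finset.sum_ite_eq' S.powerset S β]
  exact if_pos (Finset.mem_powerset_self S)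

theorem stmt_11 (p t r n : ℕ) (hp : p.Prime) (hr : 0 < r) (hn : n = r * p ^ t)
    (S : Finset ℕ) (hS : S ⊆ Finset.Icc 1 (n - 1)) :
    (descBeta n S : ℤ) ≡
      (-1) ^ ((S \ (Finset.Icc 1 (r - 1)).image (fun i => p ^ t * i)).card) *
        descBeta r ((S.filter (fun s => p ^ t ∣ s)).image (fun s => s / p ^ t))
      [ZMOD p] := by
  classical
  rw [← ZMod.intCast_eq_intCast_iff]
  push_cast
  set q := p ^ t with hqdef
  have hq : 0 < q := pow_pos hp.pos t
  have hn' : n = r * q := hn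
  have hn0 : 0 < n := by rw [hn']; exact Nat.mul_pos hr hq
  set S₀ := S.filter (fun s => q ∣ s) with hS₀def
  set S' := S₀.image (fun s => s / q) with hS'def
  have hS₀sub : S₀ ⊆ S := Finset.filter_subset _ _
  have hInj : ∀ T ⊆ S₀, ∀ s ∈ T, q ∣ s := by
    intro T hT s hs
    have := hT hs
    rw [hS₀def, Finset.mem_filter] at this
    exact this.2
  -- the exponent sets agree
  have hsub_eq : S \ (Finset.Icc 1 (r - 1)).image (fun i => q * i) = S \ S₀ := by
    ext a
    simp only [Finset.mem_sdiff, hS₀def, Finset.mem_filter, Finset.mem_image, Finset.mem_Icc]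
    constructor
    · rintro ⟨haS, hnot⟩
      refine ⟨haS, fun hcon => hnot ?_⟩
      obtain ⟨-, hdvd⟩ := hcon
      have hbound := hS haS
      rw [Finset.mem_Icc] at hbound
      refine ⟨a / q, ⟨?_, ?_⟩, Nat.mul_div_cancel' hdvd⟩
      · rw [Nat.one_le_div_iff hq]
        exact Nat.le_of_dvd (by omega) hdvd
      · have : a / q < r := by
          rw [Nat.div_lt_iff_lt_mul hq, ← hn']
          omega
        omega
    · rintro ⟨haS, hnot⟩
      refine ⟨haS, fun hcon => hnot ?_⟩
      obtain ⟨i, ⟨hi1, hi2⟩, rfl⟩ := hcon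
      exact ⟨haS, Dvd.intro i rfl⟩
  rw [hsub_eq]
  -- Möbius inversion on the n side
  have hinner : ∀ T : Finset ℕ, (∑ U ∈ T.powerset, ((descBeta n U : ZMod p)))
      = (descAlpha n T : ZMod p) := by
    intro T
    rw [descAlpha_eq_sum_descBeta n T, Nat.cast_sum]
  have key1 : (descBeta n S : ZMod p)
      = ∑ T ∈ S.powerset, (-1 : ZMod p) ^ ((S \ T).card) * (descAlpha n T : ZMod p) := by
    conv_lhs => rw [← moebius_powerset (fun T => (descBeta n T : ZMod p)) S]
    exact Finset.sum_congr rfl (fun T _ => by rw [hinner T])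
  have key2 : ∀ T ∈ S.powerset, (descAlpha n T : ZMod p)
      = if (∀ s ∈ T, q ∣ s) then (descAlpha r (T.image (fun s => s / q)) : ZMod p) else 0 := by
    intro T hT
    rw [Finset.mem_powerset] at hT
    have hTsub : T ⊆ Finset.Icc 1 (n - 1) := hT.trans hS
    rw [descAlpha_eq_card_Xset hn0 T hTsub, Xcard_modEq p t r n hp hr hn' T hTsub]
    split_ifs with hdiv
    · rw [descAlpha_eq_card_Xset hr (T.image (fun s => s / q)) ?_]
      intro s' hs'
      rw [Finset.mem_image] at hs'
      obtain ⟨sv, hsv, rfl⟩ := hs'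
      have h1 := hTsub hsv
      rw [Finset.mem_Icc] at h1 ⊢
      have hd := hdiv sv hsv
      have hq_le : q ≤ sv := Nat.le_of_dvd (by omega) hd
      have h2 : sv / q < r := by
        rw [Nat.div_lt_iff_lt_mul hq, ← hn']; omega
      have h3 : 1 ≤ sv / q := by
        rw [Nat.one_le_div_iff hq]; exact hq_le
      omega
    · rfl
  have key3 : (descBeta n S : ZMod p)
      = ∑ T ∈ S₀.powerset,
          (-1 : ZMod p) ^ ((S \ T).card) * (descAlpha r (T.image (fun s => s / q)) : ZMod p) := by
    rw [key1, Finset.sum_congr rfl (fun T hT => by rw [key2 T hT, mul_ite, mul_zero]),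
      ← Finset.sum_filter]
    apply Finset.sum_congr ?_ (fun _ _ => rfl)
    ext T
    simp only [Finset.mem_filter, Finset.mem_powerset, hS₀def]
    constructor
    · rintro ⟨hTS, hdiv⟩
      intro s hs
      exact Finset.mem_filter.mpr ⟨hTS hs, hdiv s hs⟩
    · intro h
      exact ⟨fun s hs => (Finset.mem_filter.mp (h hs)).1,
        fun s hs => (Finset.mem_filter.mp (h hs)).2⟩
  have key4 : (∑ T ∈ S₀.powerset,
        (-1 : ZMod p) ^ ((S \ T).card) * (descAlpha r (T.image (fun s => s / q)) : ZMod p))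
      = ∑ T' ∈ S'.powerset, (-1 : ZMod p) ^ ((S \ S₀).card)
          * ((-1 : ZMod p) ^ ((S' \ T').card) * (descAlpha r T' : ZMod p)) := by
    apply Finset.sum_nbij' (i := fun T => T.image (fun s => s / q))
      (j := fun T' => T'.image (fun v => q * v))
    · intro T hT
      rw [Finset.mem_powerset] at hT ⊢
      rw [hS'def]
      intro v hv
      rw [Finset.mem_image] at hv ⊢
      obtain ⟨sv, hsv, rfl⟩ := hv
      exact ⟨sv, hT hsv, rfl⟩
    · intro T' hT'
      rw [Finset.mem_powerset] at hT' ⊢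
      intro v hv
      rw [Finset.mem_image] at hv
      obtain ⟨w, hw, rfl⟩ := hv
      have hmem := hT' hw
      rw [hS'def, Finset.mem_image] at hmem
      obtain ⟨sv, hsv, rfl⟩ := hmem
      rw [hS₀def] at hsv
      rw [Nat.mul_div_cancel' ((Finset.mem_filter.mp hsv).2)]
      rw [hS₀def]
      exact hsv
    · intro T hT
      rw [Finset.mem_powerset] at hT
      rw [Finset.image_image]
      have himg : T.image ((fun v => q * v) ∘ (fun s => s / q)) = T.image id :=
        Finset.image_congr (fun s hs => Nat.mul_div_cancel' (hInj T hT s hs))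
      rw [himg, Finset.image_id]
    · intro T' _
      rw [Finset.image_image]
      have himg : T'.image ((fun s => s / q) ∘ (fun v => q * v)) = T'.image id :=
        Finset.image_congr (fun v _ => Nat.mul_div_cancel_left v hq)
      rw [himg, Finset.image_id]
    · intro T hT
      rw [Finset.mem_powerset] at hT
      have hdvdT := hInj T hT
      have hunion : S \ T = (S \ S₀) ∪ (S₀ \ T) := by
        ext a
        simp only [Finset.mem_sdiff, Finset.mem_union]
        constructor
        · rintro ⟨haS, haT⟩
          by_cases h : a ∈ S₀
          · exact Or.inr ⟨h, haT⟩
          · exact Or.inl ⟨haS, h⟩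
        · rintro (⟨haS, h⟩ | ⟨h, haT⟩)
          · exact ⟨haS, fun hc => h (hT hc)⟩
          · exact ⟨hS₀sub h, haT⟩
      have hdisj : Disjoint (S \ S₀) (S₀ \ T) := by
        rw [Finset.disjoint_right]
        intro a ha
        rw [Finset.mem_sdiff] at ha ⊢
        intro hcon
        exact hcon.2 ha.1
      have hcards : (S \ T).card = (S \ S₀).card + (S₀ \ T).card := by
        rw [hunion, Finset.card_union_of_disjoint hdisj]
      have himg_sdiff : (S₀ \ T).image (fun s => s / q) = S' \ T.image (fun s => s / q) := by
        ext v
        constructor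
        · intro hv
          rw [Finset.mem_image] at hv
          obtain ⟨sv, hsv, rfl⟩ := hv
          rw [Finset.mem_sdiff] at hsv
          rw [Finset.mem_sdiff]
          refine ⟨by rw [hS'def]; exact Finset.mem_image_of_mem _ hsv.1, ?_⟩
          intro hcon
          rw [Finset.mem_image] at hcon
          obtain ⟨w, hwT, hweq⟩ := hcon
          have hdw : q ∣ w := hdvdT w hwT
          have hds : q ∣ sv := by
            have := hsv.1
            rw [hS₀def, Finset.mem_filter] at this
            exact this.2
          have hws : w = sv := by
            rw [← Nat.div_mul_cancel hdw, ← Nat.div_mul_cancel hds, hweq]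
          exact hsv.2 (hws ▸ hwT)
        · intro hv
          rw [Finset.mem_sdiff] at hv
          obtain ⟨hv1, hv2⟩ := hv
          rw [hS'def, Finset.mem_image] at hv1
          obtain ⟨sv, hsv, rfl⟩ := hv1
          rw [Finset.mem_image]
          refine ⟨sv, ?_, rfl⟩
          rw [Finset.mem_sdiff]
          exact ⟨hsv, fun hc => hv2 (Finset.mem_image_of_mem _ hc)⟩
      have hinj_img : (S₀ \ T).card = (S' \ T.image (fun s => s / q)).card := by
        rw [← himg_sdiff, Finset.card_image_of_injOn]
        intro a ha b hb hab
        rw [Finset.mem_coe, Finset.mem_sdiff] at ha hb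
        have hda : q ∣ a := by
          have := ha.1; rw [hS₀def, Finset.mem_filter] at this; exact this.2
        have hdb : q ∣ b := by
          have := hb.1; rw [hS₀def, Finset.mem_filter] at this; exact this.2
        have hab' : a / q = b / q := hab
        rw [← Nat.div_mul_cancel hda, ← Nat.div_mul_cancel hdb, hab']
      rw [hcards, pow_add, hinj_img]
      ring
  have key5 : (∑ T' ∈ S'.powerset, (-1 : ZMod p) ^ ((S' \ T').card) * (descAlpha r T' : ZMod p))
      = (descBeta r S' : ZMod p) := by
    conv_rhs => rw [← moebius_powerset (fun U => (descBeta r U : ZMod p)) S']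
    apply Finset.sum_congr rfl
    intro T' _
    rw [descAlpha_eq_sum_descBeta r T', Nat.cast_sum]
  rw [key3, key4, ← Finset.mul_sum, key5]
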